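/- arXiv:1501.06865 — 2 statements merged into one kernel-verified Lean document; each statement's English description precedes it below -/
import Mathlib

section
/- Let X be a real vector space and let q₁, q₂ : X → ℝ be quadratic forms (i.e. q_i(u) = b_i(u,u) for symmetric bilinear forms b_i on X). For a quadratic form q on X define ν(q) ∈ ℕ ∪ {∞} as the supremum of dimensions of finite-dimensional subspaces F ⊆ X such that q(u) < 0 for every nonzero u ∈ F. Then ν(q₁ + q₂) ≤ ν(q₁) + ν(q₂). -/
noncomputable section

open Module Submodule

section Aux

variable {V : Type*} [AddCommGroup V] [Module ℝ V] {ι : Type*}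

lemma ortho_apply_sum (B : LinearMap.BilinForm ℝ V) {v : ι → V}
    (hv : B.IsOrthoᵢ v) (c : ι →₀ ℝ) :
    B (c.sum fun i a => a • v i) (c.sum fun i a => a • v i)
      = c.sum fun i a => a * a * B (v i) (v i) := by
  classical
  simp only [Finsupp.sum, map_sum, LinearMap.sum_apply, map_smul, LinearMap.smul_apply,
    smul_eq_mul]
  refine Finset.sum_congr rfl fun i hi => ?_
  rw [Finset.sum_eq_single_of_mem i hi]
  · ring
  · intro j _ hj
    exact mul_eq_zero_of_right _ (hv hj)

lemma span_negdef (B : LinearMap.BilinForm ℝ V) (v : Basis ι ℝ V)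
    (hv : B.IsOrthoᵢ v) (s : Set ι) (hs : ∀ i ∈ s, B (v i) (v i) < 0) :
    ∀ w ∈ span ℝ (v '' s), w ≠ 0 → B w w < 0 := by
  intro w hw hw0
  have hsupp : ↑(v.repr w).support ⊆ s := (Basis.mem_span_image v).mp hw
  have hrepr : w = (v.repr w).sum fun i a => a • v i := by
    conv_lhs => rw [← v.linearCombination_repr w]
    rw [Finsupp.linearCombination_apply]
  rw [hrepr, ortho_apply_sum B hv, Finsupp.sum]
  have hne : (v.repr w).support.Nonempty := by
    rw [Finsupp.support_nonempty_iff]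
    simpa using hw0
  refine Finset.sum_neg (fun i hi => ?_) hne
  have hci : v.repr w i ≠ 0 := Finsupp.mem_support_iff.mp hi
  exact mul_neg_of_pos_of_neg (mul_self_pos.mpr hci) (hs i (hsupp hi))

lemma span_nonneg (B : LinearMap.BilinForm ℝ V) (v : Basis ι ℝ V)
    (hv : B.IsOrthoᵢ v) (s : Set ι) (hs : ∀ i ∈ s, 0 ≤ B (v i) (v i)) :
    ∀ w ∈ span ℝ (v '' s), 0 ≤ B w w := by
  intro w hw
  have hsupp : ↑(v.repr w).support ⊆ s := (Basis.mem_span_image v).mp hw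
  have hrepr : w = (v.repr w).sum fun i a => a • v i := by
    conv_lhs => rw [← v.linearCombination_repr w]
    rw [Finsupp.linearCombination_apply]
  rw [hrepr, ortho_apply_sum B hv, Finsupp.sum]
  exact Finset.sum_nonneg fun i hi => mul_nonneg (mul_self_nonneg _) (hs i (hsupp hi))

end Aux

/-- The negative index of a quadratic form `q` on a real vector space: the supremum of
dimensions of finite-dimensional subspaces on which `q` is negative definite. -/
noncomputable def negIdx {X : Type*} [AddCommGroup X] [Module ℝ X] (q : X → ℝ) : ℕ∞ :=
  ⨆ F : {F : Submodule ℝ X // ∀ u ∈ F, u ≠ 0 → q u < 0},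
    (Module.finrank ℝ F.1 : ℕ∞)

/-- Subadditivity of the negative index: `ν(q₁ + q₂) ≤ ν(q₁) + ν(q₂)`. -/
theorem negIdx_add_le {X : Type*} [AddCommGroup X] [Module ℝ X]
    (b₁ b₂ : X →ₗ[ℝ] X →ₗ[ℝ] ℝ)
    (h₁ : ∀ u v, b₁ u v = b₁ v u) (h₂ : ∀ u v, b₂ u v = b₂ v u) :
    negIdx (fun u => b₁ u u + b₂ u u) ≤
      negIdx (fun u => b₁ u u) + negIdx (fun u => b₂ u u) := by
  classical
  refine iSup_le ?_
  rintro ⟨F, hF⟩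
  by_cases hfd : FiniteDimensional ℝ F
  · -- restrict b₁ to F and diagonalize
    set B : LinearMap.BilinForm ℝ F := LinearMap.BilinForm.restrict b₁ F with hB
    have hBsymm : B.IsSymm := LinearMap.BilinForm.isSymm_def.mpr fun x y => by
      simp [hB, LinearMap.BilinForm.restrict_apply, h₁]
    obtain ⟨v, hv⟩ := LinearMap.BilinForm.exists_orthogonal_basis (LinearMap.BilinForm.isSymm_iff.mp hBsymm)
    set s : Finset (Fin (finrank ℝ F)) := Finset.univ.filter (fun i => B (v i) (v i) < 0) with hsdef
    set G₁ : Submodule ℝ F := span ℝ (v '' ↑s) with hG₁def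
    set G₂ : Submodule ℝ F := span ℝ (v '' ↑sᶜ) with hG₂def
    -- negative definiteness
    have hq₁ : ∀ u ∈ G₁.map F.subtype, u ≠ 0 → b₁ u u < 0 := by
      rintro u hu hu0
      obtain ⟨w, hw, rfl⟩ := hu
      have hw0 : w ≠ 0 := fun h => hu0 (by simp [h])
      have := span_negdef B v hv ↑s (fun i hi => by
        simpa [hsdef] using (Finset.mem_filter.mp hi).2) w hw hw0
      simpa [hB, LinearMap.BilinForm.restrict_apply] using this
    have hq₂ : ∀ u ∈ G₂.map F.subtype, u ≠ 0 → b₂ u u < 0 := by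
      rintro u hu hu0
      obtain ⟨w, hw, rfl⟩ := hu
      have hw0 : w ≠ 0 := fun h => hu0 (by simp [h])
      have h0 : 0 ≤ b₁ (w : X) (w : X) := by
        have := span_nonneg B v hv ↑sᶜ (fun i hi => by
          have : ¬ B (v i) (v i) < 0 := by
            simpa [hsdef] using (Finset.mem_compl.mp hi)
          linarith [not_lt.mp this]) w hw
        simpa [hB, LinearMap.BilinForm.restrict_apply] using this
      have hsum : b₁ (w : X) (w : X) + b₂ (w : X) (w : X) < 0 :=
        hF (w : X) w.2 (by simpa using hu0)
      show (b₂ (w : X)) (w : X) < 0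
      linarith
    -- dimensions
    have hcard : ∀ t : Finset (Fin (finrank ℝ F)),
        finrank ℝ (span ℝ (⇑v '' (↑t : Set (Fin (finrank ℝ F))))) = t.card := by
      intro t
      rw [Set.image_eq_range]
      have h : LinearIndependent ℝ fun x : ↥(↑t : Set (Fin (finrank ℝ F))) => v ↑x :=
        v.linearIndependent.comp _ Subtype.val_injective
      rw [finrank_span_eq_card h]
      simp
    have hd₁ : finrank ℝ (G₁.map F.subtype) = s.card := by
      rw [Submodule.finrank_map_subtype_eq, hG₁def, hcard]
    have hd₂ : finrank ℝ (G₂.map F.subtype) = sᶜ.card := by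
      rw [Submodule.finrank_map_subtype_eq, hG₂def, hcard]
    have htot : finrank ℝ F = finrank ℝ (G₁.map F.subtype) + finrank ℝ (G₂.map F.subtype) := by
      rw [hd₁, hd₂, Finset.card_add_card_compl, Fintype.card_fin]
    calc (finrank ℝ F : ℕ∞)
        = (finrank ℝ (G₁.map F.subtype) : ℕ∞) + (finrank ℝ (G₂.map F.subtype) : ℕ∞) := by
          rw [htot]; push_cast; ring
      _ ≤ _ := add_le_add
          (le_iSup (fun G : {G : Submodule ℝ X // ∀ u ∈ G, u ≠ 0 → b₁ u u < 0} =>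
            (finrank ℝ G.1 : ℕ∞)) ⟨G₁.map F.subtype, hq₁⟩)
          (le_iSup (fun G : {G : Submodule ℝ X // ∀ u ∈ G, u ≠ 0 → b₂ u u < 0} =>
            (finrank ℝ G.1 : ℕ∞)) ⟨G₂.map F.subtype, hq₂⟩)
  · rw [Module.finrank_of_infinite_dimensional hfd]
    exact zero_le

end
end

section
/- Let d ≥ 1 and ρ ∈ (0,2). Let V : ℝ^d → ℝ be measurable, and assume there exist constants C, C', R ∈ (0,∞) such that |V(x)| ≤ C(1+|x|)^{-ρ} for all x ∈ ℝ^d and V(x) ≤ -C'|x|^{-ρ} for all |x| ≥ R. Then there exist constants c₁, c₂ ∈ (0,∞) and E₀ < 0 such that for all E ∈ (E₀, 0): c₁|E|^{d(1/2 - 1/ρ)} ≤ ∫_{ℝ^d} (V(x) - E)_-^{d/2} dx ≤ c₂|E|^{d(1/2 - 1/ρ)}. -/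
open MeasureTheory Filter Real Set Topology

noncomputable section

abbrev Ed (d : ℕ) := EuclideanSpace ℝ (Fin d)

set_option maxHeartbeats 1000000 in
/-- Two-sided estimate of the semiclassical phase-space integral `∫ (V - E)_-^{d/2} dx` for a
regularly decaying negative potential, `ρ ∈ (0,2)`. -/
theorem semiclassical_integral_two_sided_estimate
    (d : ℕ) (hd : 1 ≤ d) (ρ : ℝ) (hρ : ρ ∈ Set.Ioo (0 : ℝ) 2)
    (V : Ed d → ℝ) (hVmeas : Measurable V)
    (C C' R : ℝ) (hC : 0 < C) (hC' : 0 < C') (hR : 0 < R)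
    (hbd : ∀ x : Ed d, |V x| ≤ C * (1 + ‖x‖) ^ (-ρ))
    (hneg : ∀ x : Ed d, R ≤ ‖x‖ → V x ≤ -C' * ‖x‖ ^ (-ρ)) :
    ∃ c₁ c₂ : ℝ, 0 < c₁ ∧ 0 < c₂ ∧ ∃ E₀ : ℝ, E₀ < 0 ∧ ∀ E ∈ Set.Ioo E₀ (0 : ℝ),
      c₁ * |E| ^ ((d : ℝ) * (1 / 2 - 1 / ρ)) ≤
        (∫ x, (max (E - V x) 0) ^ ((d : ℝ) / 2)) ∧
      (∫ x, (max (E - V x) 0) ^ ((d : ℝ) / 2)) ≤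
        c₂ * |E| ^ ((d : ℝ) * (1 / 2 - 1 / ρ)) := by
  obtain ⟨hρ0, hρ2⟩ := hρ
  haveI : Nonempty (Fin d) := ⟨⟨0, hd⟩⟩
  have hd1 : (1:ℝ) ≤ (d:ℝ) := by exact_mod_cast hd
  have hdpos : (0:ℝ) < (d:ℝ) := by linarith
  set B := (volume (Metric.ball (0:Ed d) 1)).toReal with hBdef
  have hB : 0 < B :=
    ENNReal.toReal_pos (Metric.measure_ball_pos _ _ one_pos).ne' measure_ball_lt_top.ne
  set p : ℝ := (d:ℝ) - 1 - ρ*(d:ℝ)/2 with hpdef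
  have hp1 : 0 < p + 1 := by
    have h := mul_lt_mul_of_pos_right hρ2 hdpos
    rw [hpdef]; linarith
  have hp : -1 < p := by linarith
  have hq1 : (d : ℝ) * (1 / 2 - 1 / ρ) = -((p+1)/ρ) := by field_simp; ring
  have hq2 : (d : ℝ) * (1 / 2 - 1 / ρ) = (d:ℝ)/2 - (d:ℝ)/ρ := by ring
  refine ⟨B/2 * (C'/2) ^ ((d:ℝ)/ρ), (d:ℝ) * B * C ^ ((d:ℝ)/2) * C^((p+1)/ρ) / (p+1),
    by positivity, by positivity, -(C' / (2*(2*R)^ρ)), by rw [neg_lt_zero]; positivity, ?_⟩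
  rintro E ⟨hE₀, hE0⟩
  have hEpos : 0 < |E| := abs_pos.2 hE0.ne
  have habs : |E| = -E := abs_of_neg hE0
  set g := fun x : Ed d => (max (E - V x) 0) ^ ((d:ℝ)/2) with hgdef
  have hg_nonneg : ∀ x, 0 ≤ g x := fun x => rpow_nonneg (le_max_right _ _) _
  have hg_meas : Measurable g :=
    (Real.continuous_rpow_const (by positivity)).measurable.comp
      ((measurable_const.sub hVmeas).max measurable_const)
  -- the radius s beyond which the integrand vanishes
  set s : ℝ := (C/|E|) ^ (1/ρ) with hsdef
  have hs : 0 < s := rpow_pos_of_pos (div_pos hC hEpos) _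
  have hsneg : s ^ (-ρ) = |E| / C := by
    rw [hsdef, ← Real.rpow_mul (div_pos hC hEpos).le,
      show (1/ρ)*(-ρ) = -1 by field_simp, Real.rpow_neg_one, inv_div]
  -- pointwise bound
  have key : ∀ x : Ed d, g x ≤ C ^ ((d:ℝ)/2) * (1 + ‖x‖) ^ (-(ρ*((d:ℝ)/2))) := by
    intro x
    have h0 : (0:ℝ) ≤ 1 + ‖x‖ := by positivity
    have h1 : max (E - V x) 0 ≤ C * (1 + ‖x‖) ^ (-ρ) := by
      have h2 : E - V x ≤ |V x| := by
        have := neg_abs_le (V x); linarith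
      exact max_le (h2.trans (hbd x)) (by positivity)
    calc g x ≤ (C * (1 + ‖x‖) ^ (-ρ)) ^ ((d:ℝ)/2) :=
          Real.rpow_le_rpow (le_max_right _ _) h1 (by positivity)
      _ = C ^ ((d:ℝ)/2) * (1 + ‖x‖) ^ (-(ρ*((d:ℝ)/2))) := by
          rw [Real.mul_rpow hC.le (by positivity), ← Real.rpow_mul h0, neg_mul]
  -- the dominating radial profile
  set f : ℝ → ℝ :=
    (Icc 0 s).indicator (fun y => C ^ ((d:ℝ)/2) * ((1+|y|) ^ (ρ*((d:ℝ)/2)))⁻¹) with hfdef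
  have hfval : ∀ y : ℝ, y ∈ Icc 0 s → f y = C ^ ((d:ℝ)/2) * (1+y) ^ (-(ρ*((d:ℝ)/2))) := by
    intro y hy
    rw [hfdef, Set.indicator_of_mem hy, abs_of_nonneg hy.1,
      Real.rpow_neg (by linarith [hy.1] : (0:ℝ) ≤ 1 + y)]
  have hf_nonneg : ∀ y, 0 ≤ f y := by
    intro y
    apply Set.indicator_nonneg
    intro y _; positivity
  have hgf : ∀ x : Ed d, g x ≤ f ‖x‖ := by
    intro x
    by_cases hx : ‖x‖ ≤ s
    · rw [hfval _ ⟨norm_nonneg x, hx⟩]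
      exact key x
    · push_neg at hx
      rw [hfdef, Set.indicator_of_notMem (fun h => absurd h.2 (not_le.2 hx))]
      have hVx : E ≤ V x := by
        have h1 : (1 + ‖x‖) ^ (-ρ) ≤ s ^ (-ρ) :=
          rpow_le_rpow_of_nonpos hs (by linarith [norm_nonneg x]) (by linarith)
        have h2 : |V x| ≤ |E| := by
          calc |V x| ≤ C * (1 + ‖x‖) ^ (-ρ) := hbd x
            _ ≤ C * (|E| / C) := by rw [← hsneg]; exact mul_le_mul_of_nonneg_left h1 hC.le
            _ = |E| := by field_simp
        rw [habs] at h2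
        linarith [(abs_le.1 h2).1]
      have hmax : max (E - V x) 0 = 0 := max_eq_right (by linarith)
      rw [hgdef]
      simp only [hmax]
      rw [Real.zero_rpow (by positivity)]
  have hf_meas : Measurable f := by
    apply Measurable.indicator _ measurableSet_Icc
    apply Measurable.const_mul
    apply Measurable.inv
    exact (Real.continuous_rpow_const (by positivity)).measurable.comp
      (measurable_const.add measurable_abs)
  -- integrability of the dominating function
  have hcompmeas : Measurable (fun x : Ed d => f ‖x‖) := hf_meas.comp measurable_norm
  have hfi : Integrable (fun x : Ed d => f ‖x‖) := by
    refine Integrable.mono' (g := fun x : Ed d =>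
        (Metric.closedBall (0:Ed d) s).indicator (fun _ => C ^ ((d:ℝ)/2)) x)
      ?_ hcompmeas.aestronglyMeasurable ?_
    · exact (integrable_indicator_iff measurableSet_closedBall).2
        (integrableOn_const measure_closedBall_lt_top.ne)
    refine ae_of_all _ fun x => ?_
    rw [Real.norm_eq_abs, abs_of_nonneg (hf_nonneg _)]
    show f ‖x‖ ≤ (Metric.closedBall (0:Ed d) s).indicator (fun _ => C ^ ((d:ℝ)/2)) x
    by_cases hx : ‖x‖ ∈ Icc (0:ℝ) s
    · rw [hfval _ hx,
        Set.indicator_of_mem (mem_closedBall_zero_iff.2 hx.2)]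
      have h1 : (1 + ‖x‖) ^ (-(ρ*((d:ℝ)/2))) ≤ 1 :=
        Real.rpow_le_one_of_one_le_of_nonpos (by linarith [norm_nonneg x])
          (neg_nonpos.2 (by positivity))
      exact mul_le_of_le_one_right (by positivity) h1
    · rw [hfdef, Set.indicator_of_notMem hx]
      apply Set.indicator_nonneg
      intro y _; positivity
  have hgi : Integrable g :=
    hfi.mono' hg_meas.aestronglyMeasurable
      (ae_of_all _ fun x => by rw [Real.norm_eq_abs, abs_of_nonneg (hg_nonneg x)]; exact hgf x)
  constructor
  · -- LOWER BOUND
    set r : ℝ := (C'/(2*|E|)) ^ (1/ρ) with hrdef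
    have hr0 : 0 < r := rpow_pos_of_pos (div_pos hC' (by positivity)) _
    have hrneg : r ^ (-ρ) = 2*|E| / C' := by
      rw [hrdef, ← Real.rpow_mul (div_pos hC' (by positivity)).le,
        show (1/ρ)*(-ρ) = -1 by field_simp, Real.rpow_neg_one, inv_div]
    have hrR : 2*R < r := by
      have h2R : (0:ℝ) < 2*R := by linarith
      have h1 : |E| < C' / (2*(2*R)^ρ) := by rw [habs]; linarith
      have h2 : (2*R)^ρ < C'/(2*|E|) := by
        rw [lt_div_iff₀ (by positivity)] at h1 ⊢
        nlinarith [Real.rpow_pos_of_pos h2R ρ]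
      calc 2*R = ((2*R)^ρ) ^ (1/ρ) := by
            rw [← Real.rpow_mul h2R.le, mul_one_div_cancel hρ0.ne', Real.rpow_one]
        _ < r := Real.rpow_lt_rpow (by positivity) h2 (by positivity)
    set A : Set (Ed d) := Metric.closedBall (0:Ed d) r \ Metric.ball 0 R with hAdef
    have hA_meas : MeasurableSet A := measurableSet_closedBall.diff measurableSet_ball
    have hsub : Metric.ball (0:Ed d) R ⊆ Metric.closedBall 0 r :=
      Metric.ball_subset_closedBall.trans (Metric.closedBall_subset_closedBall (by linarith))
    have hvolA : (volume A).toReal = r^d * B - R^d * B := by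
      rw [hAdef, measure_diff hsub measurableSet_ball.nullMeasurableSet measure_ball_lt_top.ne,
        ENNReal.toReal_sub_of_le (measure_mono hsub) measure_closedBall_lt_top.ne,
        Measure.addHaar_closedBall _ _ hr0.le, Measure.addHaar_ball _ _ hR.le,
        finrank_euclideanSpace_fin, ENNReal.toReal_mul, ENNReal.toReal_mul,
        ENNReal.toReal_ofReal (by positivity), ENNReal.toReal_ofReal (by positivity)]
    have hvol2 : r^d * B / 2 ≤ (volume A).toReal := by
      rw [hvolA]
      have h1 : R^d ≤ (r/2)^d := pow_le_pow_left₀ hR.le (by linarith) d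
      have h2 : (2:ℝ) ≤ 2^d := by
        have := pow_le_pow_right₀ one_le_two hd (a := (2:ℝ))
        simpa using this
      have h3 : (r/2)^d = r^d / 2^d := div_pow r 2 d
      have h4 : r^d / 2^d ≤ r^d / 2 :=
        div_le_div_of_nonneg_left (pow_nonneg hr0.le d) two_pos h2
      have h5 : R^d * B ≤ r^d/2 * B := by
        calc R^d * B ≤ (r/2)^d * B := mul_le_mul_of_nonneg_right h1 hB.le
          _ = r^d/2^d * B := by rw [h3]
          _ ≤ r^d/2 * B := mul_le_mul_of_nonneg_right h4 hB.le
      linarith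
    have hlow : ∀ x ∈ A, |E| ^ ((d:ℝ)/2) ≤ g x := by
      intro x hx
      obtain ⟨hx1, hx2⟩ := hx
      rw [mem_closedBall_zero_iff] at hx1
      rw [mem_ball_zero_iff, not_lt] at hx2
      have hx0 : 0 < ‖x‖ := lt_of_lt_of_le hR hx2
      have h1 : V x ≤ -(2*|E|) := by
        have h2 : r ^ (-ρ) ≤ ‖x‖ ^ (-ρ) :=
          rpow_le_rpow_of_nonpos hx0 hx1 (by linarith)
        have h3 : V x ≤ -C' * ‖x‖^(-ρ) := hneg x hx2
        have h4 : -C' * ‖x‖^(-ρ) ≤ -C' * r^(-ρ) := by nlinarith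
        have h5 : -C' * r^(-ρ) = -(2*|E|) := by
          rw [hrneg, neg_mul]
          congr 1
          rw [mul_comm, div_mul_cancel₀ _ hC'.ne']
        linarith
      have h6 : |E| ≤ max (E - V x) 0 := le_max_of_le_left (by rw [habs] at *; linarith)
      exact Real.rpow_le_rpow hEpos.le h6 (by positivity)
    have hAfin : volume A < ⊤ :=
      lt_of_le_of_lt (measure_mono Set.diff_subset) measure_closedBall_lt_top
    have step1 : |E| ^ ((d:ℝ)/2) * (volume A).toReal ≤ ∫ x, g x := by
      have i1 : ∫ x in A, (|E| ^ ((d:ℝ)/2)) ≤ ∫ x in A, g x :=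
        setIntegral_mono_on (integrableOn_const hAfin.ne) hgi.integrableOn hA_meas hlow
      have i2 : ∫ x in A, (|E| ^ ((d:ℝ)/2)) = (volume A).toReal * |E| ^ ((d:ℝ)/2) := by
        rw [setIntegral_const, smul_eq_mul]; rfl
      have i3 : ∫ x in A, g x ≤ ∫ x, g x := setIntegral_le_integral hgi (ae_of_all _ hg_nonneg)
      linarith [i1, i3, i2 ▸ i1]
    -- identify the power of |E|
    have hrd : (r:ℝ)^d = (C'/2) ^ ((d:ℝ)/ρ) * (|E| ^ ((d:ℝ)/ρ))⁻¹ := by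
      have : r^d = r ^ ((d:ℝ)) := (Real.rpow_natCast r d).symm
      rw [this, hrdef, ← Real.rpow_mul (div_pos hC' (by positivity)).le,
        show (1/ρ)*(d:ℝ) = (d:ℝ)/ρ by ring,
        show C'/(2*|E|) = (C'/2)/|E| by ring,
        Real.div_rpow (by positivity) hEpos.le, div_eq_mul_inv]
    have hEq : |E| ^ ((d:ℝ)/2) * (|E| ^ ((d:ℝ)/ρ))⁻¹ = |E| ^ ((d:ℝ)*(1/2 - 1/ρ)) := by
      rw [hq2, Real.rpow_sub hEpos]
      exact (div_eq_mul_inv _ _).symm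
    calc B/2 * (C'/2) ^ ((d:ℝ)/ρ) * |E| ^ ((d : ℝ) * (1 / 2 - 1 / ρ))
        = |E| ^ ((d:ℝ)/2) * (r^d * B / 2) := by
          rw [hrd, ← hEq]; ring
      _ ≤ |E| ^ ((d:ℝ)/2) * (volume A).toReal :=
          mul_le_mul_of_nonneg_left hvol2 (by positivity)
      _ ≤ ∫ x, g x := step1
  · -- UPPER BOUND
    have radial := MeasureTheory.integral_fun_norm_addHaar (volume : Measure (Ed d)) f
    rw [finrank_euclideanSpace_fin] at radial
    have step1 : ∫ x, g x ≤ ∫ x : Ed d, f ‖x‖ :=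
      integral_mono_of_nonneg (ae_of_all _ hg_nonneg) hfi (ae_of_all _ hgf)
    -- bound the radial integral
    set F2 : ℝ → ℝ := fun y => C ^ ((d:ℝ)/2) * y ^ p with hF2def
    have hF2int : IntegrableOn F2 (Ioc 0 s) := by
      have := (intervalIntegral.intervalIntegrable_rpow' hp (a := 0) (b := s)).const_mul (C ^ ((d:ℝ)/2))
      rwa [intervalIntegrable_iff_integrableOn_Ioc_of_le hs.le] at this
    have hcomp : ∀ y ∈ Ioi (0:ℝ), y ^ (d-1) • f y ≤ (Ioc 0 s).indicator F2 y := by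
      intro y hy
      have hy0 : (0:ℝ) < y := hy
      by_cases hys : y ≤ s
      · rw [Set.indicator_of_mem (Set.mem_Ioc.2 ⟨hy0, hys⟩), hfval _ ⟨hy0.le, hys⟩, smul_eq_mul, hF2def]
        have e1 : (y:ℝ) ^ (d-1) = y ^ ((d:ℝ)-1) := by
          rw [← Real.rpow_natCast y (d-1), Nat.cast_sub hd, Nat.cast_one]
        have e2 : (1+y) ^ (-(ρ*((d:ℝ)/2))) ≤ y ^ (-(ρ*((d:ℝ)/2))) :=
          rpow_le_rpow_of_nonpos hy0 (by linarith) (neg_nonpos.2 (by positivity))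
        calc y ^ (d-1) * (C ^ ((d:ℝ)/2) * (1+y) ^ (-(ρ*((d:ℝ)/2))))
            ≤ y ^ (d-1) * (C ^ ((d:ℝ)/2) * y ^ (-(ρ*((d:ℝ)/2)))) := by
              apply mul_le_mul_of_nonneg_left _ (by positivity)
              exact mul_le_mul_of_nonneg_left e2 (by positivity)
          _ = C ^ ((d:ℝ)/2) * y ^ p := by
              rw [e1, mul_left_comm, ← Real.rpow_add hy0]
              congr 2
              rw [hpdef]; ring
      · push_neg at hys
        rw [Set.indicator_of_notMem (fun h => absurd h.2 (not_le.2 hys)), hfdef,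
          Set.indicator_of_notMem (fun h => absurd h.2 (not_le.2 hys)), smul_zero]
    have hcomp0 : ∀ y : ℝ, 0 ≤ y ^ (d-1) • f y := by
      intro y
      rcases le_or_gt 0 y with hy | hy
      · exact smul_nonneg (pow_nonneg hy _) (hf_nonneg y)
      · rw [hfdef, Set.indicator_of_notMem (fun h => absurd h.1 (not_le.2 hy)), smul_zero]
    have step2 : (∫ y in Ioi (0:ℝ), y ^ (d-1) • f y) ≤ ∫ y in Ioc 0 s, F2 y := by
      have i1 : (∫ y in Ioi (0:ℝ), y ^ (d-1) • f y) ≤ ∫ y in Ioi (0:ℝ), (Ioc 0 s).indicator F2 y := by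
        apply integral_mono_of_nonneg (ae_of_all _ hcomp0)
          (((integrable_indicator_iff measurableSet_Ioc).2 hF2int).integrableOn)
        exact (ae_restrict_iff' measurableSet_Ioi).2 (ae_of_all _ hcomp)
      have i2 : (∫ y in Ioi (0:ℝ), (Ioc 0 s).indicator F2 y) = ∫ y in Ioc 0 s, F2 y := by
        rw [setIntegral_indicator measurableSet_Ioc,
          Set.inter_eq_self_of_subset_right Ioc_subset_Ioi_self]
      linarith [i2 ▸ i1]
    have step3 : (∫ y in Ioc 0 s, F2 y) = C ^ ((d:ℝ)/2) * (s ^ (p+1) / (p+1)) := by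
      rw [← intervalIntegral.integral_of_le hs.le, hF2def,
        intervalIntegral.integral_const_mul, integral_rpow (Or.inl hp),
        Real.zero_rpow (by positivity), sub_zero]
    have hsp : s ^ (p+1) = C ^ ((p+1)/ρ) * |E| ^ ((d:ℝ)*(1/2 - 1/ρ)) := by
      rw [hsdef, ← Real.rpow_mul (div_pos hC hEpos).le,
        show (1/ρ)*(p+1) = (p+1)/ρ by ring,
        Real.div_rpow hC.le hEpos.le, hq1, Real.rpow_neg hEpos.le]
      exact div_eq_mul_inv _ _
    calc ∫ x, g x ≤ ∫ x : Ed d, f ‖x‖ := step1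
      _ = (d:ℝ) * (B * ∫ y in Ioi (0:ℝ), y ^ (d-1) • f y) := by
          rw [radial, nsmul_eq_mul, smul_eq_mul]; rfl
      _ ≤ (d:ℝ) * (B * (C ^ ((d:ℝ)/2) * (s ^ (p+1) / (p+1)))) := by
          apply mul_le_mul_of_nonneg_left _ hdpos.le
          apply mul_le_mul_of_nonneg_left _ hB.le
          rw [← step3]; exact step2
      _ = (d:ℝ) * B * C ^ ((d:ℝ)/2) * C^((p+1)/ρ) / (p+1) * |E| ^ ((d:ℝ)*(1/2 - 1/ρ)) := by
          rw [hsp]; field_simp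
end
end
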